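/- Let A be a real n×n Metzler matrix (all off-diagonal entries nonnegative) and suppose there exists a vector z ∈ ℝⁿ with z_i > 0 for all i such that every entry of the row vector zᵀA is ≤ 0 (i.e., Σ_i z_i·A_{ij} ≤ 0 for every j). Then every complex eigenvalue of A has nonpositive real part. -/

import Mathlib

open Matrix

/-- If `A` is a real `n×n` Metzler matrix (all off-diagonal entries nonnegative)
and there is a strictly positive vector `z` with `zᵀA ≤ 0` componentwise, then every complex
eigenvalue of `A` has nonpositive real part. -/
theorem metzler_diag_dominant_eigenvalues_nonpos {n : ℕ}
    (A : Matrix (Fin n) (Fin n) ℝ)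
    (hMetzler : ∀ i j, i ≠ j → 0 ≤ A i j)
    (z : Fin n → ℝ) (hz : ∀ i, 0 < z i)
    (hdd : ∀ j, ∑ i, z i * A i j ≤ 0) :
    ∀ μ : ℂ, (∃ v : Fin n → ℂ, v ≠ 0 ∧ (A.map Complex.ofReal) *ᵥ v = μ • v) → μ.re ≤ 0 := by
  rintro μ ⟨v, hv, hAv⟩
  set B := A.map Complex.ofReal with hB
  have hdet : (B - μ • 1).det = 0 := by
    rw [← Matrix.exists_mulVec_eq_zero_iff]
    refine ⟨v, hv, ?_⟩
    rw [Matrix.sub_mulVec, Matrix.smul_mulVec, Matrix.one_mulVec, hAv, sub_self]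
  have hdetT : ((B - μ • 1)ᵀ).det = 0 := by rw [Matrix.det_transpose]; exact hdet
  obtain ⟨u, hu0, hu⟩ := (Matrix.exists_mulVec_eq_zero_iff).mpr hdetT
  have heq : ∀ k, ∑ i, (A i k : ℂ) * u i = μ * u k := by
    intro k
    have h1 := congrFun hu k
    rw [Matrix.transpose_sub, Matrix.transpose_smul, Matrix.transpose_one, Matrix.sub_mulVec, Matrix.smul_mulVec, Matrix.one_mulVec] at h1
    simp only [Pi.sub_apply, Pi.smul_apply, smul_eq_mul, Pi.zero_apply, sub_eq_zero] at h1
    rw [← h1]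
    simp [Matrix.mulVec, dotProduct, Matrix.transpose_apply, hB, Matrix.map_apply]
  obtain ⟨i₀, hi₀⟩ := Function.ne_iff.mp hu0
  have hne : (Finset.univ : Finset (Fin n)).Nonempty := ⟨i₀, Finset.mem_univ _⟩
  obtain ⟨j, -, hj⟩ := Finset.exists_max_image Finset.univ
    (fun i => ‖u i‖ / z i) hne
  set c : ℝ := ‖u j‖ / z j with hc
  have hcpos : 0 < c := by
    have h1 : ‖u i₀‖ / z i₀ ≤ c := hj i₀ (Finset.mem_univ _)
    have h2 : 0 < ‖u i₀‖ / z i₀ :=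
      div_pos (norm_pos_iff.mpr (by simpa using hi₀)) (hz i₀)
    linarith
  have hle : ∀ i, ‖u i‖ ≤ c * z i := by
    intro i
    have := hj i (Finset.mem_univ _)
    rw [div_le_iff₀ (hz i)] at this
    linarith [this]
  have hujz : ‖u j‖ = c * z j :=
    (div_mul_cancel₀ _ (hz j).ne').symm
  -- key eigen identity at j, isolating the diagonal
  have hsplit : (μ - (A j j : ℂ)) * u j = ∑ i ∈ Finset.univ.erase j, (A i j : ℂ) * u i := by
    have h1 := heq j
    rw [← Finset.add_sum_erase _ _ (Finset.mem_univ j)] at h1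
    rw [sub_mul]
    linear_combination -h1
  have habs : ‖μ - (A j j : ℂ)‖ * (c * z j) ≤ c * (-(z j * A j j)) := by
    have h1 : ‖(μ - (A j j : ℂ)) * u j‖
        ≤ ∑ i ∈ Finset.univ.erase j, A i j * (c * z i) := by
      rw [hsplit]
      refine (norm_sum_le _ _).trans ?_
      refine Finset.sum_le_sum fun i hi => ?_
      rw [norm_mul, Complex.norm_real, Real.norm_eq_abs,
        abs_of_nonneg (hMetzler i j (Finset.ne_of_mem_erase hi))]
      exact mul_le_mul_of_nonneg_left (hle i) (hMetzler i j (Finset.ne_of_mem_erase hi))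
    have h2 : ∑ i ∈ Finset.univ.erase j, A i j * (c * z i)
        = c * ∑ i ∈ Finset.univ.erase j, z i * A i j := by
      rw [Finset.mul_sum]; apply Finset.sum_congr rfl; intro i _; ring
    have h3 : ∑ i ∈ Finset.univ.erase j, z i * A i j ≤ -(z j * A j j) := by
      have := hdd j
      rw [← Finset.add_sum_erase _ _ (Finset.mem_univ j)] at this
      linarith
    have h4 : c * ∑ i ∈ Finset.univ.erase j, z i * A i j ≤ c * (-(z j * A j j)) :=
      mul_le_mul_of_nonneg_left h3 hcpos.le
    calc ‖μ - (A j j : ℂ)‖ * (c * z j)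
        = ‖(μ - (A j j : ℂ)) * u j‖ := by rw [norm_mul, hujz]
      _ ≤ ∑ i ∈ Finset.univ.erase j, A i j * (c * z i) := h1
      _ = c * ∑ i ∈ Finset.univ.erase j, z i * A i j := h2
      _ ≤ c * (-(z j * A j j)) := h4
  have hczpos : 0 < c * z j := mul_pos hcpos (hz j)
  have hfin : ‖μ - (A j j : ℂ)‖ ≤ -A j j := by
    have h5 : c * (-(z j * A j j)) = (c * z j) * (-A j j) := by ring
    rw [h5] at habs
    exact le_of_mul_le_mul_right (by linarith [habs]) hczpos |>.trans (le_refl _)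
  have hre : μ.re - A j j ≤ ‖μ - (A j j : ℂ)‖ := by
    have := Complex.re_le_norm (μ - (A j j : ℂ))
    simpa using this
  linarith
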